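/- If H1 and H2 are simple finite hypergraphs, then their normal product H1⊠̌H2 is a simple hypergraph. -/

import Mathlib

/-!
Basic definitions: finite hypergraphs (a finite nonempty vertex set `V`, given by
`[Fintype V] [Nonempty V]`, together with a set of nonempty edges), walks, distance,
connectedness, simplicity, rank, colorings, Helly property, covers,
the various hypergraph products, 2-sections, and graph products.
-/

/-- A hypergraph on a vertex type `V`: a collection of nonempty edges (finite subsets of `V`). -/
structure FinsetHypergraph (V : Type*) where
  edges : Set (Finset V)
  nonempty_edges : ∀ e ∈ edges, e.Nonempty

namespace FinsetHypergraph

variable {V V₁ V₂ : Type*}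

/-- There is a walk of length `n` from `u` to `v`: a sequence of vertices `w 0, …, w n`
and edges `f 1, …, f n` with consecutive vertices distinct and both contained
in the corresponding edge. -/
def HasWalk (H : FinsetHypergraph V) (u v : V) (n : ℕ) : Prop :=
  ∃ (w : Fin (n + 1) → V) (f : Fin n → Finset V),
    w 0 = u ∧ w (Fin.last n) = v ∧
      ∀ i : Fin n, f i ∈ H.edges ∧ w i.castSucc ≠ w i.succ ∧
        w i.castSucc ∈ f i ∧ w i.succ ∈ f i

/-- The distance between two vertices: the minimum length of a walk joining them,
`⊤ = ∞` if there is none. -/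
noncomputable def dist (H : FinsetHypergraph V) (u v : V) : ℕ∞ :=
  sInf {x : ℕ∞ | ∃ n : ℕ, x = n ∧ H.HasWalk u v n}

/-- A hypergraph is connected if any two vertices are joined by a walk. -/
def Connected (H : FinsetHypergraph V) : Prop := ∀ u v : V, ∃ n, H.HasWalk u v n

/-- A hypergraph is simple if every edge has at least two vertices and
no edge is contained in another edge. -/
def Simple (H : FinsetHypergraph V) : Prop :=
  (∀ e ∈ H.edges, 2 ≤ e.card) ∧ ∀ e ∈ H.edges, ∀ f ∈ H.edges, e ⊆ f → e = f

/-- A hypergraph is loopless if every edge has at least two vertices. -/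
def Loopless (H : FinsetHypergraph V) : Prop := ∀ e ∈ H.edges, 2 ≤ e.card

/-- The rank: the maximum cardinality of an edge. -/
noncomputable def rank (H : FinsetHypergraph V) : ℕ := sSup (Finset.card '' H.edges)

/-- The anti-rank: the minimum cardinality of an edge. -/
noncomputable def antirank (H : FinsetHypergraph V) : ℕ := sInf (Finset.card '' H.edges)

/-- A proper coloring: no color class contains an edge. -/
def IsProperColoring (H : FinsetHypergraph V) {k : ℕ} (c : V → Fin k) : Prop :=
  ∀ e ∈ H.edges, ∀ i : Fin k, ¬ ∀ v ∈ e, c v = i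

/-- A proper strong coloring: a proper coloring in which the vertices of every
edge receive pairwise distinct colors. -/
def IsStrongColoring (H : FinsetHypergraph V) {k : ℕ} (c : V → Fin k) : Prop :=
  H.IsProperColoring c ∧ ∀ e ∈ H.edges, ∀ u ∈ e, ∀ v ∈ e, u ≠ v → c u ≠ c v

/-- The chromatic number: the least `k` admitting a proper `k`-coloring. -/
noncomputable def chromaticNumber (H : FinsetHypergraph V) : ℕ :=
  sInf {k : ℕ | ∃ c : V → Fin k, H.IsProperColoring c}

/-- The strong chromatic number: the least `k` admitting a proper strong `k`-coloring. -/
noncomputable def strongChromaticNumber (H : FinsetHypergraph V) : ℕ :=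
  sInf {k : ℕ | ∃ c : V → Fin k, H.IsStrongColoring c}

/-- The Helly property: every intersecting family of edges is a star. -/
def Helly (H : FinsetHypergraph V) : Prop :=
  ∀ E' ⊆ H.edges, (∀ e ∈ E', ∀ f ∈ E', ∃ x, x ∈ e ∧ x ∈ f) → ∃ v, ∀ e ∈ E', v ∈ e

/-- The covering number: the minimum cardinality of a set of vertices meeting every edge. -/
noncomputable def coverNumber (H : FinsetHypergraph V) : ℕ :=
  sInf {k : ℕ | ∃ T : Finset V, T.card = k ∧ ∀ e ∈ H.edges, ∃ v ∈ T, v ∈ e}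

/-- The Cartesian product of hypergraphs. -/
def cartProd (H₁ : FinsetHypergraph V₁) (H₂ : FinsetHypergraph V₂) : FinsetHypergraph (V₁ × V₂) where
  edges := {E | (∃ x, ∃ f ∈ H₂.edges, E = {x} ×ˢ f) ∨ ∃ e ∈ H₁.edges, ∃ y, E = e ×ˢ {y}}
  nonempty_edges := by
    rintro E (⟨x, f, hf, rfl⟩ | ⟨e, he, y, rfl⟩)
    · exact (Finset.singleton_nonempty x).product (H₂.nonempty_edges f hf)
    · exact (H₁.nonempty_edges e he).product (Finset.singleton_nonempty y)

section Products

variable [DecidableEq V₁] [DecidableEq V₂]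

/-- The minimal-rank-preserving direct product `H₁ ×̌ H₂`. -/
def minDirProd (H₁ : FinsetHypergraph V₁) (H₂ : FinsetHypergraph V₂) : FinsetHypergraph (V₁ × V₂) where
  edges := {E | ∃ e₁ ∈ H₁.edges, ∃ e₂ ∈ H₂.edges,
    E ⊆ e₁ ×ˢ e₂ ∧ E.card = min e₁.card e₂.card ∧
      (E.image Prod.fst).card = min e₁.card e₂.card ∧
      (E.image Prod.snd).card = min e₁.card e₂.card}
  nonempty_edges := by
    rintro E ⟨e₁, h₁, e₂, h₂, -, hc, -, -⟩
    rw [← Finset.card_pos, hc]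
    exact lt_min (Finset.card_pos.mpr (H₁.nonempty_edges e₁ h₁))
      (Finset.card_pos.mpr (H₂.nonempty_edges e₂ h₂))

/-- The maximal-rank-preserving direct product `H₁ ×̂ H₂`. -/
def maxDirProd (H₁ : FinsetHypergraph V₁) (H₂ : FinsetHypergraph V₂) : FinsetHypergraph (V₁ × V₂) where
  edges := {E | ∃ e₁ ∈ H₁.edges, ∃ e₂ ∈ H₂.edges,
    E ⊆ e₁ ×ˢ e₂ ∧ E.card = max e₁.card e₂.card ∧
      E.image Prod.fst = e₁ ∧ E.image Prod.snd = e₂}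
  nonempty_edges := by
    rintro E ⟨e₁, h₁, e₂, h₂, -, hc, -, -⟩
    rw [← Finset.card_pos, hc]
    exact lt_max_iff.mpr (Or.inl (Finset.card_pos.mpr (H₁.nonempty_edges e₁ h₁)))

/-- The non-rank-preserving direct product `H₁ ×̃ H₂`. -/
def nrDirProd (H₁ : FinsetHypergraph V₁) (H₂ : FinsetHypergraph V₂) : FinsetHypergraph (V₁ × V₂) where
  edges := {E | ∃ e ∈ H₁.edges, ∃ f ∈ H₂.edges, ∃ x ∈ e, ∃ y ∈ f,
    E = insert (x, y) ((e.erase x) ×ˢ (f.erase y))}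
  nonempty_edges := by
    rintro E ⟨e, -, f, -, x, -, y, -, rfl⟩
    exact Finset.insert_nonempty _ _

/-- The normal product `H₁ ⊠̌ H₂`: union of the Cartesian product edges and the
minimal-rank-preserving direct product edges. -/
def normalProd (H₁ : FinsetHypergraph V₁) (H₂ : FinsetHypergraph V₂) : FinsetHypergraph (V₁ × V₂) where
  edges := (H₁.cartProd H₂).edges ∪ (H₁.minDirProd H₂).edges
  nonempty_edges := by
    rintro E (h | h)
    · exact (H₁.cartProd H₂).nonempty_edges E h
    · exact (H₁.minDirProd H₂).nonempty_edges E h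

/-- The strong product `H₁ ⊠̂ H₂`: union of the Cartesian product edges and the
maximal-rank-preserving direct product edges. -/
def strongProd (H₁ : FinsetHypergraph V₁) (H₂ : FinsetHypergraph V₂) : FinsetHypergraph (V₁ × V₂) where
  edges := (H₁.cartProd H₂).edges ∪ (H₁.maxDirProd H₂).edges
  nonempty_edges := by
    rintro E (h | h)
    · exact (H₁.cartProd H₂).nonempty_edges E h
    · exact (H₁.maxDirProd H₂).nonempty_edges E h

/-- The lexicographic product `H₁ ∘ H₂`. -/
def lexProd (H₁ : FinsetHypergraph V₁) (H₂ : FinsetHypergraph V₂) : FinsetHypergraph (V₁ × V₂) where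
  edges := {E | (E.image Prod.fst ∈ H₁.edges ∧ (E.image Prod.fst).card = E.card) ∨
    ∃ x, ∃ e₂ ∈ H₂.edges, E = {x} ×ˢ e₂}
  nonempty_edges := by
    rintro E (⟨h₁, hc⟩ | ⟨x, e₂, h₂, rfl⟩)
    · rw [← Finset.card_pos, ← hc]
      exact Finset.card_pos.mpr (H₁.nonempty_edges _ h₁)
    · exact (Finset.singleton_nonempty x).product (H₂.nonempty_edges e₂ h₂)

end Products

/-- The square product `H₁ ■ H₂`. -/
def squareProd (H₁ : FinsetHypergraph V₁) (H₂ : FinsetHypergraph V₂) : FinsetHypergraph (V₁ × V₂) where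
  edges := {E | ∃ e₁ ∈ H₁.edges, ∃ e₂ ∈ H₂.edges, E = e₁ ×ˢ e₂}
  nonempty_edges := by
    rintro E ⟨e₁, h₁, e₂, h₂, rfl⟩
    exact (H₁.nonempty_edges e₁ h₁).product (H₂.nonempty_edges e₂ h₂)

/-- The 2-section of a hypergraph: distinct vertices are adjacent iff they lie
in a common edge. -/
def twoSection (H : FinsetHypergraph V) : SimpleGraph V where
  Adj x y := x ≠ y ∧ ∃ e ∈ H.edges, x ∈ e ∧ y ∈ e
  symm := ⟨by rintro x y ⟨hxy, e, he, hx, hy⟩; exact ⟨hxy.symm, e, he, hy, hx⟩⟩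
  loopless := ⟨by rintro x ⟨hx, -⟩; exact hx rfl⟩

end FinsetHypergraph

namespace SimpleGraph

variable {V₁ V₂ : Type*}

/-- The direct (tensor) product of simple graphs. -/
def directProd (G₁ : SimpleGraph V₁) (G₂ : SimpleGraph V₂) : SimpleGraph (V₁ × V₂) where
  Adj x y := G₁.Adj x.1 y.1 ∧ G₂.Adj x.2 y.2
  symm := ⟨fun _ _ ⟨h₁, h₂⟩ => ⟨h₁.symm, h₂.symm⟩⟩
  loopless := ⟨fun x h => G₁.loopless.irrefl x.1 h.1⟩

/-- The strong product of simple graphs. -/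
def strongGraphProd (G₁ : SimpleGraph V₁) (G₂ : SimpleGraph V₂) : SimpleGraph (V₁ × V₂) where
  Adj x y := x ≠ y ∧ ((x.1 = y.1 ∧ G₂.Adj x.2 y.2) ∨ (x.2 = y.2 ∧ G₁.Adj x.1 y.1) ∨
    (G₁.Adj x.1 y.1 ∧ G₂.Adj x.2 y.2))
  symm := by
    refine ⟨?_⟩
    rintro x y ⟨hne, (⟨h, h'⟩ | ⟨h, h'⟩ | ⟨h, h'⟩)⟩
    · exact ⟨hne.symm, Or.inl ⟨h.symm, h'.symm⟩⟩
    · exact ⟨hne.symm, Or.inr (Or.inl ⟨h.symm, h'.symm⟩)⟩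
    · exact ⟨hne.symm, Or.inr (Or.inr ⟨h.symm, h'.symm⟩)⟩
  loopless := ⟨by rintro x ⟨hx, -⟩; exact hx rfl⟩

/-- The lexicographic product of simple graphs. -/
def lexGraphProd (G₁ : SimpleGraph V₁) (G₂ : SimpleGraph V₂) : SimpleGraph (V₁ × V₂) where
  Adj x y := G₁.Adj x.1 y.1 ∨ (x.1 = y.1 ∧ G₂.Adj x.2 y.2)
  symm := by
    refine ⟨?_⟩
    rintro x y (h | ⟨h, h'⟩)
    · exact Or.inl h.symm
    · exact Or.inr ⟨h.symm, h'.symm⟩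
  loopless := by
    refine ⟨?_⟩
    rintro x (h | ⟨-, h⟩)
    · exact G₁.loopless.irrefl x.1 h
    · exact G₂.loopless.irrefl x.2 h

end SimpleGraph

/-- the normal product of simple hypergraphs is simple. -/
theorem simple_normalProd {V₁ V₂ : Type*} [Fintype V₁] [Nonempty V₁] [DecidableEq V₁]
    [Fintype V₂] [Nonempty V₂] [DecidableEq V₂] (H₁ : FinsetHypergraph V₁) (H₂ : FinsetHypergraph V₂)
    (h₁ : H₁.Simple) (h₂ : H₂.Simple) :
    (H₁.normalProd H₂).Simple := by
  obtain ⟨h₁c, h₁s⟩ := h₁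
  obtain ⟨h₂c, h₂s⟩ := h₂
  constructor
  · rintro E hE
    rcases hE with (⟨x, f, hf, rfl⟩ | ⟨e, he, y, rfl⟩) | ⟨e₁, he₁, e₂, he₂, -, hc, -, -⟩
    · simpa using h₂c f hf
    · simpa using h₁c e he
    · rw [hc]; exact le_min (h₁c e₁ he₁) (h₂c e₂ he₂)
  · have imgfst : ∀ (x : V₁) (f : Finset V₂), f.Nonempty →
        (({x} ×ˢ f : Finset (V₁ × V₂)).image Prod.fst) = {x} := by
      intro x f hf
      apply Finset.Subset.antisymm
      · intro a ha
        simp only [Finset.mem_image] at ha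
        obtain ⟨p, hp, rfl⟩ := ha
        simp only [Finset.mem_product, Finset.mem_singleton] at hp
        simp [hp.1]
      · obtain ⟨b, hb⟩ := hf
        intro a ha
        simp only [Finset.mem_singleton] at ha
        exact Finset.mem_image.2 ⟨(a, b), by simp [ha, hb], rfl⟩
    have imgsnd : ∀ (e : Finset V₁) (y : V₂), e.Nonempty →
        ((e ×ˢ {y} : Finset (V₁ × V₂)).image Prod.snd) = {y} := by
      intro e y he
      apply Finset.Subset.antisymm
      · intro a ha
        simp only [Finset.mem_image] at ha
        obtain ⟨p, hp, rfl⟩ := ha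
        simp only [Finset.mem_product, Finset.mem_singleton] at hp
        simp [hp.2]
      · obtain ⟨b, hb⟩ := he
        intro a ha
        simp only [Finset.mem_singleton] at ha
        exact Finset.mem_image.2 ⟨(b, a), by simp [ha, hb], rfl⟩
    rintro E hE F hF hEF
    rcases hE with (⟨x, f, hf, rfl⟩ | ⟨e, he, y, rfl⟩) | ⟨e₁, he₁, e₂, he₂, hEsub, hEc, hEp1, hEp2⟩ <;>
      rcases hF with (⟨x', f', hf', rfl⟩ | ⟨e', he', y', rfl⟩) | ⟨f₁, hf₁, f₂, hf₂, hFsub, hFc, hFp1, hFp2⟩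
    -- E = {x}×f
    · -- F = {x'}×f'
      obtain ⟨b, hb⟩ := H₂.nonempty_edges f hf
      have hx : x = x' := by
        have := hEF (show (x, b) ∈ ({x} ×ˢ f : Finset (V₁ × V₂)) by simp [hb])
        exact Finset.mem_singleton.1 (Finset.mem_product.1 this).1
      subst hx
      have hsub : f ⊆ f' := by
        intro b' hb'
        have := hEF (show (x, b') ∈ ({x} ×ˢ f : Finset (V₁ × V₂)) by simp [hb'])
        exact (Finset.mem_product.1 this).2
      rw [h₂s f hf f' hf' hsub]
    · -- F = e'×{y'} : impossible
      exfalso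
      have h2 : 2 ≤ f.card := h₂c f hf
      have hsub : f ⊆ {y'} := by
        intro b' hb'
        have := hEF (show (x, b') ∈ ({x} ×ˢ f : Finset (V₁ × V₂)) by simp [hb'])
        exact (Finset.mem_product.1 this).2
      have := Finset.card_le_card hsub
      simp at this; omega
    · -- F min : impossible
      exfalso
      have hinj : Set.InjOn Prod.fst (F : Set (V₁ × V₂)) :=
        Finset.card_image_iff.1 (by rw [hFp1, hFc])
      have hinjE : Set.InjOn Prod.fst (({x} ×ˢ f : Finset (V₁ × V₂)) : Set (V₁ × V₂)) :=
        hinj.mono (Finset.coe_subset.2 hEF)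
      have hcard := Finset.card_image_of_injOn hinjE
      rw [imgfst x f (H₂.nonempty_edges f hf)] at hcard
      have h2 : 2 ≤ f.card := h₂c f hf
      simp [Finset.card_product] at hcard
      omega
    -- E = e×{y}
    · -- F = {x'}×f' : impossible
      exfalso
      have h2 : 2 ≤ e.card := h₁c e he
      have hsub : e ⊆ {x'} := by
        intro b' hb'
        have := hEF (show (b', y) ∈ (e ×ˢ {y} : Finset (V₁ × V₂)) by simp [hb'])
        exact (Finset.mem_product.1 this).1
      have := Finset.card_le_card hsub
      simp at this; omega
    · -- F = e'×{y'}
      obtain ⟨b, hb⟩ := H₁.nonempty_edges e he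
      have hy : y = y' := by
        have := hEF (show (b, y) ∈ (e ×ˢ {y} : Finset (V₁ × V₂)) by simp [hb])
        exact Finset.mem_singleton.1 (Finset.mem_product.1 this).2
      subst hy
      have hsub : e ⊆ e' := by
        intro b' hb'
        have := hEF (show (b', y) ∈ (e ×ˢ {y} : Finset (V₁ × V₂)) by simp [hb'])
        exact (Finset.mem_product.1 this).1
      rw [h₁s e he e' he' hsub]
    · -- F min : impossible
      exfalso
      have hinj : Set.InjOn Prod.snd (F : Set (V₁ × V₂)) :=
        Finset.card_image_iff.1 (by rw [hFp2, hFc])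
      have hinjE : Set.InjOn Prod.snd ((e ×ˢ {y} : Finset (V₁ × V₂)) : Set (V₁ × V₂)) :=
        hinj.mono (Finset.coe_subset.2 hEF)
      have hcard := Finset.card_image_of_injOn hinjE
      rw [imgsnd e y (H₁.nonempty_edges e he)] at hcard
      have h2 : 2 ≤ e.card := h₁c e he
      simp [Finset.card_product] at hcard
      omega
    -- E min
    · -- F = {x'}×f' : impossible
      exfalso
      have h2 : 2 ≤ E.card := by
        rw [hEc]; exact le_min (h₁c e₁ he₁) (h₂c e₂ he₂)
      have hsub : E.image Prod.fst ⊆ {x'} := by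
        intro a ha
        simp only [Finset.mem_image] at ha
        obtain ⟨p, hp, rfl⟩ := ha
        exact (Finset.mem_product.1 (hEF hp)).1
      have := Finset.card_le_card hsub
      rw [hEp1, ← hEc] at this
      simp at this; omega
    · -- F = e'×{y'} : impossible
      exfalso
      have h2 : 2 ≤ E.card := by
        rw [hEc]; exact le_min (h₁c e₁ he₁) (h₂c e₂ he₂)
      have hsub : E.image Prod.snd ⊆ {y'} := by
        intro a ha
        simp only [Finset.mem_image] at ha
        obtain ⟨p, hp, rfl⟩ := ha
        exact (Finset.mem_product.1 (hEF hp)).2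
      have := Finset.card_le_card hsub
      rw [hEp2, ← hEc] at this
      simp at this; omega
    · -- F min : main case
      have hFcard : F.card ≤ E.card := by
        rcases le_total e₁.card e₂.card with hle | hle
        · have hmin : min e₁.card e₂.card = e₁.card := min_eq_left hle
          have himg : E.image Prod.fst = e₁ := by
            apply Finset.eq_of_subset_of_card_le
            · intro a ha
              simp only [Finset.mem_image] at ha
              obtain ⟨p, hp, rfl⟩ := ha
              exact (Finset.mem_product.1 (hEsub hp)).1
            · rw [hEp1, hmin]
          have hsub : e₁ ⊆ f₁ := by
            rw [← himg]
            intro a ha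
            simp only [Finset.mem_image] at ha
            obtain ⟨p, hp, rfl⟩ := ha
            exact (Finset.mem_product.1 (hFsub (hEF hp))).1
          have heq : e₁ = f₁ := h₁s e₁ he₁ f₁ hf₁ hsub
          rw [hFc, hEc, ← heq, hmin]
          exact min_le_left _ _
        · have hmin : min e₁.card e₂.card = e₂.card := min_eq_right hle
          have himg : E.image Prod.snd = e₂ := by
            apply Finset.eq_of_subset_of_card_le
            · intro a ha
              simp only [Finset.mem_image] at ha
              obtain ⟨p, hp, rfl⟩ := ha
              exact (Finset.mem_product.1 (hEsub hp)).2
            · rw [hEp2, hmin]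
          have hsub : e₂ ⊆ f₂ := by
            rw [← himg]
            intro a ha
            simp only [Finset.mem_image] at ha
            obtain ⟨p, hp, rfl⟩ := ha
            exact (Finset.mem_product.1 (hFsub (hEF hp))).2
          have heq : e₂ = f₂ := h₂s e₂ he₂ f₂ hf₂ hsub
          rw [hFc, hEc, ← heq, hmin]
          exact min_le_right _ _
      exact Finset.eq_of_subset_of_card_le hEF hFcard
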